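/- arXiv:1601.03526 — 5 statements merged into one kernel-verified Lean document; each statement's English description precedes it below -/
import Mathlib

section
/- Let G be a bispanning graph with disjoint spanning trees S and T. For every edge e ∈ S there exists an edge f ∈ T such that S - e + f and T + e - f are again a pair of disjoint spanning trees of G; moreover any f ≠ e in D(S,e) ∩ C(T,e) works. -/
namespace MG

variable {V E : Type*}

/-- Two vertices are joined by an edge of `F`. -/
def Adj (ends : E → Sym2 V) (F : Set E) (u v : V) : Prop :=
  ∃ e ∈ F, ends e = s(u, v)

/-- Reachability using edges of `F`. -/
def Reach (ends : E → Sym2 V) (F : Set E) : V → V → Prop :=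
  Relation.ReflTransGen (Adj ends F)

/-- The edge set `F` connects all vertices of the multigraph. -/
def Conn (ends : E → Sym2 V) (F : Set E) : Prop :=
  ∀ u v : V, Reach ends F u v

/-- `F` is a spanning tree: it connects all vertices using exactly `|V| - 1` edges. -/
def IsSpanningTree (ends : E → Sym2 V) (F : Set E) : Prop :=
  Conn ends F ∧ Nat.card F = Nat.card V - 1

/-- The multigraph is bispanning: its edge set is the disjoint union of two spanning trees. -/
def Bispanning (ends : E → Sym2 V) : Prop :=
  ∃ S T : Set E, S ∪ T = Set.univ ∧ Disjoint S T ∧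
    IsSpanningTree ends S ∧ IsSpanningTree ends T

/-- Degree of a vertex: number of incident edges. -/
noncomputable def deg (ends : E → Sym2 V) (v : V) : ℕ :=
  Nat.card {e : E | v ∈ ends e}

/-- `C` is (the edge set of) a simple cycle: nonempty, connected, and every
incident vertex is incident to exactly two edges of `C`. -/
def IsCycle (ends : E → Sym2 V) (C : Set E) : Prop :=
  C.Nonempty ∧
  (∀ u v : V, (∃ e ∈ C, u ∈ ends e) → (∃ e ∈ C, v ∈ ends e) → Reach ends C u v) ∧
  (∀ v : V, (∃ e ∈ C, v ∈ ends e) → Nat.card {e : E | e ∈ C ∧ v ∈ ends e} = 2)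

/-- Number of connected components when only edges of `F` are used. -/
noncomputable def numComp (ends : E → Sym2 V) (F : Set E) : ℕ :=
  Nat.card (Quot (Reach ends F))

/-- `D` is an edge cut: removing it increases the number of components. -/
def IsEdgeCut (ends : E → Sym2 V) (D : Set E) : Prop :=
  numComp ends Set.univ < numComp ends Dᶜ

/-- A minimal edge cut: no proper subset is an edge cut. -/
def IsMinEdgeCut (ends : E → Sym2 V) (D : Set E) : Prop :=
  IsEdgeCut ends D ∧ ∀ D' : Set E, D' ⊂ D → ¬ IsEdgeCut ends D'

/-- `D` is the fundamental cut of the tree edge `e` of the spanning tree `F`: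
the minimal edge cut contained in `(E \ F) + e`, which contains `e`. -/
def IsFundCut (ends : E → Sym2 V) (F : Set E) (e : E) (D : Set E) : Prop :=
  D ⊆ insert e Fᶜ ∧ e ∈ D ∧ IsMinEdgeCut ends D

/-- `C` is the fundamental cycle of the non-tree edge `e` w.r.t. the spanning tree `F`:
the cycle contained in `F + e`, which contains `e`. -/
def IsFundCycle (ends : E → Sym2 V) (F : Set E) (e : E) (C : Set E) : Prop :=
  C ⊆ insert e F ∧ e ∈ C ∧ IsCycle ends C

end MG

namespace MGAux
open MG

variable {V E : Type*} {ends : E → Sym2 V} {F F' : Set E} {u v x y : V}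

lemma adj_symm (h : Adj ends F u v) : Adj ends F v u := by
  obtain ⟨g, hg, hends⟩ := h
  exact ⟨g, hg, hends.trans Sym2.eq_swap⟩

lemma reach_symm (h : Reach ends F u v) : Reach ends F v u :=
  by
  induction h with
  | refl => exact .refl
  | tail _ hbc ih => exact (Relation.ReflTransGen.single (adj_symm hbc)).trans ih

lemma reach_equiv : Equivalence (Reach ends F) :=
  ⟨fun _ => .refl, reach_symm, Relation.ReflTransGen.trans⟩

lemma reach_mono (hFF : F ⊆ F') (h : Reach ends F u v) : Reach ends F' u v :=
  Relation.ReflTransGen.mono (r := Adj ends F) (p := Adj ends F') (fun _ _ ⟨g, hg, he⟩ => ⟨g, hFF hg, he⟩) _ _ h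

lemma reach_iff_quot_eq :
    Reach ends F u v ↔ Quot.mk (Reach ends F) u = Quot.mk (Reach ends F) v := by
  rw [Quot.eq, Equivalence.eqvGen_iff reach_equiv]

lemma numComp_le_of_reach_imp
    (h : ∀ u v : V, Reach ends F u v → Reach ends F' u v) [Finite V] :
    numComp ends F' ≤ numComp ends F := by
  apply Nat.card_le_card_of_surjective
    (Quot.lift (fun w => Quot.mk (Reach ends F') w)
      (fun a b hab => Quot.sound (h a b hab)))
  intro q
  obtain ⟨w, rfl⟩ := Quot.exists_rep q
  exact ⟨Quot.mk _ w, rfl⟩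

lemma numComp_le_of_subset [Finite V] (hFF : F ⊆ F') :
    numComp ends F' ≤ numComp ends F :=
  numComp_le_of_reach_imp (fun _ _ h => reach_mono hFF h)

lemma reach_insert_iff {g : E} (hg : ends g = s(x, y)) (u v : V) :
    Reach ends (insert g F) u v ↔ Reach ends F u v ∨
      (Reach ends F u x ∧ Reach ends F y v) ∨
      (Reach ends F u y ∧ Reach ends F x v) := by
  constructor
  · intro h
    induction h with
    | refl => exact Or.inl .refl
    | @tail b c hab hbc ih =>
      obtain ⟨h, hhF, hends⟩ := hbc
      rcases Set.mem_insert_iff.mp hhF with rfl | hF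
      · rw [hg] at hends
        rcases Sym2.eq_iff.mp hends with ⟨rfl, rfl⟩ | ⟨rfl, rfl⟩
        · rcases ih with h1 | ⟨h1, h2⟩ | ⟨h1, h2⟩
          · exact Or.inr (Or.inl ⟨h1, .refl⟩)
          · exact Or.inl (h1.trans (reach_symm h2))
          · exact Or.inl h1
        · rcases ih with h1 | ⟨h1, h2⟩ | ⟨h1, h2⟩
          · exact Or.inr (Or.inr ⟨h1, .refl⟩)
          · exact Or.inl h1
          · exact Or.inl (h1.trans (reach_symm h2))
      · have step : Reach ends F b c := Relation.ReflTransGen.single ⟨h, hF, hends⟩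
        rcases ih with h1 | ⟨h1, h2⟩ | ⟨h1, h2⟩
        · exact Or.inl (h1.trans step)
        · exact Or.inr (Or.inl ⟨h1, h2.trans step⟩)
        · exact Or.inr (Or.inr ⟨h1, h2.trans step⟩)
  · rintro (h1 | ⟨h1, h2⟩ | ⟨h1, h2⟩)
    · exact reach_mono (Set.subset_insert _ _) h1
    · exact ((reach_mono (Set.subset_insert _ _) h1).trans
        (Relation.ReflTransGen.single ⟨g, Set.mem_insert _ _, hg⟩)).trans
        (reach_mono (Set.subset_insert _ _) h2)
    · exact ((reach_mono (Set.subset_insert _ _) h1).trans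
        (Relation.ReflTransGen.single ⟨g, Set.mem_insert _ _, hg.trans Sym2.eq_swap⟩)).trans
        (reach_mono (Set.subset_insert _ _) h2)

lemma numComp_le_insert_add_one [Finite V] (F : Set E) (g : E) :
    numComp ends F ≤ numComp ends (insert g F) + 1 := by
  classical
  obtain ⟨x, y, hg⟩ : ∃ x y, ends g = s(x, y) := (ends g).ind (fun a b => ⟨a, b, rfl⟩)
  set R' := Reach ends F with hR'
  set R := Reach ends (insert g F) with hR
  haveI : Fintype (Quot R) := Fintype.ofFinite _
  haveI : Finite (Option (Quot R)) := inferInstance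
  have hresp : ∀ a b : V, R' a b →
      (if R' a y ∧ ¬ R' a x then (none : Option (Quot R)) else some (Quot.mk R a)) =
      (if R' b y ∧ ¬ R' b x then (none : Option (Quot R)) else some (Quot.mk R b)) := by
    intro a b hab
    by_cases hc : R' a y ∧ ¬ R' a x
    · have hc' : R' b y ∧ ¬ R' b x :=
        ⟨(reach_symm hab).trans hc.1, fun h => hc.2 (hab.trans h)⟩
      simp [hc, hc']
    · have hc' : ¬ (R' b y ∧ ¬ R' b x) := by
        intro h
        exact hc ⟨hab.trans h.1, fun h2 => h.2 ((reach_symm hab).trans h2)⟩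
      simp only [if_neg hc, if_neg hc']
      exact congrArg some (Quot.sound (reach_mono (Set.subset_insert _ _) hab))
  have hinj : Function.Injective (Quot.lift _ hresp) := by
    intro qa qb
    obtain ⟨a, rfl⟩ := Quot.exists_rep qa
    obtain ⟨b, rfl⟩ := Quot.exists_rep qb
    by_cases hc : R' a y ∧ ¬ R' a x <;> by_cases hc' : R' b y ∧ ¬ R' b x <;>
      simp only [Quot.lift_mk, if_pos, if_neg, hc, hc', reduceIte] <;> intro hh
    · exact Quot.sound (hc.1.trans (reach_symm hc'.1))
    · simp at hh
    · simp at hh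
    · have hR2 : R a b :=
        (reach_iff_quot_eq (F := insert g F)).mpr (Option.some_injective _ hh)
      apply Quot.sound
      rcases (reach_insert_iff hg a b).mp hR2 with h1 | ⟨h1, h2⟩ | ⟨h1, h2⟩
      · exact h1
      · have hbx : R' b x := by
          by_contra hbx
          exact hc' ⟨reach_symm h2, hbx⟩
        exact h1.trans (reach_symm hbx)
      · have hax : R' a x := by
          by_contra hax
          exact hc ⟨h1, hax⟩
        exact hax.trans h2
  have hle : Nat.card (Quot R') ≤ Nat.card (Option (Quot R)) :=
    Nat.card_le_card_of_injective _ hinj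
  have hopt : Nat.card (Option (Quot R)) = Nat.card (Quot R) + 1 := by
    simp [Nat.card_eq_fintype_card]
  rw [hopt] at hle
  exact hle

lemma reach_empty (h : Reach ends (∅ : Set E) u v) : u = v := by
  induction h with
  | refl => rfl
  | tail _ hbc ih => exact absurd hbc.choose_spec.1 (Set.notMem_empty _)

lemma numComp_empty [Finite V] : numComp ends (∅ : Set E) = Nat.card V := by
  refine (Nat.card_eq_of_bijective (Quot.mk (Reach ends (∅ : Set E))) ⟨?_, ?_⟩).symm
  · intro a b hab
    exact reach_empty ((reach_iff_quot_eq).mpr hab)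
  · intro q
    obtain ⟨w, rfl⟩ := Quot.exists_rep q
    exact ⟨w, rfl⟩


lemma card_le_numComp_add [Finite V] [Finite E] (F : Set E) :
    Nat.card V ≤ numComp ends F + F.ncard := by
  refine Set.Finite.induction_on F (Set.toFinite F) (by simp [numComp_empty]) ?_
  intro a s ha hs ih
  have h1 := numComp_le_insert_add_one (ends := ends) s a
  have h2 : (insert a s).ncard = s.ncard + 1 := Set.ncard_insert_of_notMem ha hs
  omega

lemma conn_of_numComp_eq_one [Finite V] (h : numComp ends F = 1) : Conn ends F := by
  intro u v
  haveI := (Nat.card_eq_one_iff_unique.mp h).1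
  exact reach_iff_quot_eq.mpr (Subsingleton.elim _ _)

lemma numComp_eq_one [Finite V] [Nonempty V] (h : Conn ends F) : numComp ends F = 1 := by
  refine Nat.card_eq_one_iff_unique.mpr ⟨⟨fun a b => ?_⟩, ⟨Quot.mk _ (Classical.arbitrary V)⟩⟩
  obtain ⟨a, rfl⟩ := Quot.exists_rep a
  obtain ⟨b, rfl⟩ := Quot.exists_rep b
  exact Quot.sound (h a b)

lemma reach_incident (h : Reach ends F u v) : u = v ∨ ∃ g ∈ F, v ∈ ends g := by
  induction h with
  | refl => exact Or.inl rfl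
  | tail _ hbc _ =>
    obtain ⟨g, hgF, hends⟩ := hbc
    exact Or.inr ⟨g, hgF, by rw [hends]; exact Sym2.mem_mk_right _ _⟩

lemma exists_crossing {A : Set V} {w : V} (h : Reach ends F x w) (hx : x ∈ A)
    (hw : w ∉ A) : ∃ g ∈ F, ∃ a b, ends g = s(a, b) ∧ a ∈ A ∧ b ∉ A := by
  revert hw
  induction h with
  | refl => exact fun hw => absurd hx hw
  | @tail b c hab hbc ih =>
    intro hcA
    by_cases hbA : b ∈ A
    · obtain ⟨g, hgF, hends⟩ := hbc
      exact ⟨g, hgF, b, c, hends, hbA, hcA⟩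
    · exact ih hbA

lemma conn_of_sides (hxy : Reach ends F x y)
    (hs : ∀ w, Reach ends F x w ∨ Reach ends F y w) : Conn ends F := by
  have hx : ∀ w, Reach ends F x w := by
    intro w
    rcases hs w with h | h
    · exact h
    · exact hxy.trans h
  exact fun u v => (reach_symm (hx u)).trans (hx v)

lemma tree_sides [Finite V] [Finite E] (hF : IsSpanningTree ends F) {g : E} (hg : g ∈ F)
    (hxy : ends g = s(x, y)) :
    ¬ Reach ends (F \ {g}) x y ∧
      ∀ w, Reach ends (F \ {g}) x w ∨ Reach ends (F \ {g}) y w := by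
  have hcard : F.ncard = Nat.card V - 1 := by
    rw [← Nat.card_coe_set_eq]; exact hF.2
  have hFpos : 0 < F.ncard := (Set.ncard_pos (Set.toFinite F)).mpr ⟨g, hg⟩
  have hV2 : 2 ≤ Nat.card V := by omega
  haveI : Nonempty V := (Nat.card_pos_iff.mp (by omega)).1
  have heq : insert g (F \ {g}) = F := by
    rw [Set.insert_diff_singleton]; exact Set.insert_eq_self.mpr hg
  have h1 : numComp ends F = 1 := numComp_eq_one hF.1
  have hle : numComp ends (F \ {g}) ≤ 2 := by
    have := numComp_le_insert_add_one (ends := ends) (F \ {g}) g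
    rw [heq, h1] at this
    omega
  have hge : 2 ≤ numComp ends (F \ {g}) := by
    have hb := card_le_numComp_add (ends := ends) (F \ {g})
    have hncd : (F \ {g}).ncard = F.ncard - 1 := Set.ncard_diff_singleton_of_mem hg
    omega
  have hiff := fun u v => reach_insert_iff (F := F \ {g}) hxy u v
  simp only [heq] at hiff
  have hnxy : ¬ Reach ends (F \ {g}) x y := by
    intro hr
    have himp : ∀ u v : V, Reach ends F u v → Reach ends (F \ {g}) u v := by
      intro u v huv
      rcases (hiff u v).mp huv with h' | ⟨h1', h2'⟩ | ⟨h1', h2'⟩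
      · exact h'
      · exact h1'.trans (hr.trans h2')
      · exact h1'.trans ((reach_symm hr).trans h2')
    have := numComp_le_of_reach_imp himp
    omega
  refine ⟨hnxy, fun w => ?_⟩
  rcases (hiff x w).mp (hF.1 x w) with h' | ⟨h1', h2'⟩ | ⟨h1', h2'⟩
  · exact Or.inl h'
  · exact Or.inr h2'
  · exact absurd h1' hnxy

lemma cycle_reach [Finite V] [Finite E] (hloop : ∀ e : E, ¬ (ends e).IsDiag)
    {C : Set E} (hC : MG.IsCycle ends C) {f : E} (hf : f ∈ C) {u v : V}
    (huv : ends f = s(u, v)) : Reach ends (C \ {f}) u v := by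
  classical
  haveI := Fintype.ofFinite V
  haveI := Fintype.ofFinite E
  by_contra hvA
  set A : Set V := {w | Reach ends (C \ {f}) u w} with hA
  have huA : u ∈ A := Relation.ReflTransGen.refl
  have hclosed : ∀ a b : V, a ∈ A → Adj ends (C \ {f}) a b → b ∈ A :=
    fun a b ha hab => Relation.ReflTransGen.tail ha hab
  have hvA' : v ∉ A := hvA
  have hne : u ≠ v := by
    intro h
    exact hloop f (by rw [huv, h]; exact Sym2.mk_isDiag_iff.mpr rfl)
  set Af : Finset V := Finset.univ.filter (· ∈ A) with hAf
  have hmemAf : ∀ w : V, w ∈ Af ↔ w ∈ A := by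
    intro w; simp [hAf]
  have hdeg : ∀ w : V, (∃ g ∈ C, w ∈ ends g) →
      (Finset.univ.filter (fun g : E => g ∈ C ∧ w ∈ ends g)).card = 2 := by
    intro w hw
    have h2 := hC.2.2 w hw
    rwa [Nat.card_coe_set_eq, Set.ncard_eq_toFinset_card', Set.toFinset_setOf] at h2
  have hcount : ∀ w ∈ Af,
      (Finset.univ.filter (fun g : E => (g ∈ C ∧ g ≠ f) ∧ w ∈ ends g)).card =
        if w = u then 1 else 2 := by
    intro w hw
    rw [hmemAf] at hw
    by_cases hwu : w = u
    · subst hwu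
      rw [if_pos rfl]
      have hset : (Finset.univ.filter (fun g : E => (g ∈ C ∧ g ≠ f) ∧ w ∈ ends g)) =
          (Finset.univ.filter (fun g : E => g ∈ C ∧ w ∈ ends g)).erase f := by
        ext g
        simp only [Finset.mem_filter, Finset.mem_erase, Finset.mem_univ, true_and]
        tauto
      have hfmem : f ∈ Finset.univ.filter (fun g : E => g ∈ C ∧ w ∈ ends g) := by
        simp only [Finset.mem_filter, Finset.mem_univ, true_and]
        exact ⟨hf, by rw [huv]; exact Sym2.mem_mk_left _ _⟩
      rw [hset, Finset.card_erase_of_mem hfmem, hdeg w ⟨f, hf, by rw [huv]; exact Sym2.mem_mk_left _ _⟩]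
    · rw [if_neg hwu]
      obtain ⟨g, hgCf, hgw⟩ : ∃ g ∈ C \ {f}, w ∈ ends g := by
        rcases reach_incident hw with h | h
        · exact absurd h.symm hwu
        · exact h
      have hwf : w ∉ ends f := by
        rw [huv, Sym2.mem_iff]
        rintro (rfl | rfl)
        · exact hwu rfl
        · exact hvA' hw
      have hset : (Finset.univ.filter (fun g : E => (g ∈ C ∧ g ≠ f) ∧ w ∈ ends g)) =
          Finset.univ.filter (fun g : E => g ∈ C ∧ w ∈ ends g) := by
        ext g'
        simp only [Finset.mem_filter, Finset.mem_univ, true_and]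
        constructor
        · rintro ⟨⟨h1, _⟩, h2⟩; exact ⟨h1, h2⟩
        · rintro ⟨h1, h2⟩
          refine ⟨⟨h1, ?_⟩, h2⟩
          rintro rfl
          exact hwf h2
      rw [hset]
      exact hdeg w ⟨g, hgCf.1, hgw⟩
  set N : ℕ := ∑ w ∈ Af, (Finset.univ.filter (fun g : E => (g ∈ C ∧ g ≠ f) ∧ w ∈ ends g)).card
    with hN
  have hodd : N = 2 * (Af \ {u}).card + 1 := by
    have huAf : u ∈ Af := (hmemAf u).mpr huA
    rw [hN, Finset.sum_congr rfl hcount,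
      Finset.sum_eq_sum_sdiff_singleton_add huAf, if_pos rfl]
    have : ∀ w ∈ Af \ {u}, (if w = u then 1 else 2) = 2 := by
      intro w hw
      rw [if_neg (by simp at hw; exact hw.2)]
    rw [Finset.sum_congr rfl this, Finset.sum_const, smul_eq_mul, mul_comm]
  have heven : Even N := by
    have hswap : N = ∑ g ∈ Finset.univ, ∑ w ∈ Af,
        (if (g ∈ C ∧ g ≠ f) ∧ w ∈ ends g then 1 else 0) := by
      rw [hN]
      rw [Finset.sum_congr rfl (fun w _ => Finset.card_filter _ _)]
      exact Finset.sum_comm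
    rw [hswap]
    apply Finset.sum_induction _ Even (fun a b => Even.add) Even.zero
    intro g _
    by_cases hg : g ∈ C ∧ g ≠ f
    · obtain ⟨a, b, hab⟩ : ∃ a b, ends g = s(a, b) := (ends g).ind (fun a b => ⟨a, b, rfl⟩)
      have hne' : a ≠ b := fun h => hloop g (by rw [hab, h]; exact Sym2.mk_isDiag_iff.mpr rfl)
      have hinner : ∑ w ∈ Af, (if (g ∈ C ∧ g ≠ f) ∧ w ∈ ends g then 1 else 0) =
          (Af.filter (· ∈ ends g)).card := by
        rw [Finset.card_filter]
        exact Finset.sum_congr rfl (fun w _ => by simp [hg])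
      rw [hinner]
      have hAdj : Adj ends (C \ {f}) a b := ⟨g, ⟨hg.1, hg.2⟩, hab⟩
      by_cases haA : a ∈ A
      · have hbA : b ∈ A := hclosed a b haA hAdj
        have : Af.filter (· ∈ ends g) = {a, b} := by
          ext w
          simp only [Finset.mem_filter, Finset.mem_insert, Finset.mem_singleton, hmemAf,
            hab, Sym2.mem_iff]
          constructor
          · exact fun h => h.2
          · rintro (rfl | rfl)
            · exact ⟨haA, Or.inl rfl⟩
            · exact ⟨hbA, Or.inr rfl⟩
        rw [this, Finset.card_insert_of_notMem (by simpa using hne'), Finset.card_singleton]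
        exact even_two
      · have hbA : b ∉ A := fun hb => haA (hclosed b a hb (adj_symm hAdj))
        have : Af.filter (· ∈ ends g) = ∅ := by
          ext w
          simp only [Finset.mem_filter, Finset.notMem_empty, iff_false, hmemAf, hab,
            Sym2.mem_iff]
          rintro ⟨hwA, rfl | rfl⟩
          · exact haA hwA
          · exact hbA hwA
        rw [this]
        simp
    · have : ∑ w ∈ Af, (if (g ∈ C ∧ g ≠ f) ∧ w ∈ ends g then 1 else 0) = 0 := by
        apply Finset.sum_eq_zero
        intro w _
        rw [if_neg (fun h => hg h.1)]
      rw [this]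
      exact Even.zero
  obtain ⟨k, hk⟩ := heven
  omega


end MGAux


/-- Symmetric edge exchange in bispanning graphs: for disjoint spanning trees `S`, `T`
and `e ∈ S`, there is an edge `f ∈ T` such that `S - e + f` and `T + e - f` are again
disjoint spanning trees; moreover any `f ≠ e` in `D(S,e) ∩ C(T,e)` works. -/
theorem symmetric_edge_exchange {V E : Type*} [Finite V] [Finite E]
    (ends : E → Sym2 V) (hloop : ∀ e : E, ¬ (ends e).IsDiag)
    (S T : Set E) (hU : S ∪ T = Set.univ) (hd : Disjoint S T)
    (hS : MG.IsSpanningTree ends S) (hT : MG.IsSpanningTree ends T)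
    (e : E) (he : e ∈ S)
    (D : Set E) (hD : MG.IsFundCut ends S e D)
    (C : Set E) (hC : MG.IsFundCycle ends T e C) :
    (∃ f ∈ T, MG.IsSpanningTree ends (insert f (S \ {e})) ∧
        MG.IsSpanningTree ends (insert e (T \ {f}))) ∧
    (∀ f ∈ D ∩ C, f ≠ e →
      f ∈ T ∧ MG.IsSpanningTree ends (insert f (S \ {e})) ∧
        MG.IsSpanningTree ends (insert e (T \ {f}))) := by
  classical
  obtain ⟨hDsub, heD, hDcut, hDmin⟩ :
      D ⊆ insert e Sᶜ ∧ e ∈ D ∧ MG.IsEdgeCut ends D ∧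
        ∀ D' : Set E, D' ⊂ D → ¬ MG.IsEdgeCut ends D' :=
    ⟨hD.1, hD.2.1, hD.2.2.1, hD.2.2.2⟩
  obtain ⟨hCsub, heC, hcyc⟩ := hC
  obtain ⟨x, y, hxy⟩ : ∃ x y, ends e = s(x, y) := (ends e).ind (fun a b => ⟨a, b, rfl⟩)
  have hSn : S.ncard = Nat.card V - 1 := by
    rw [← Nat.card_coe_set_eq]; exact hS.2
  have hTn : T.ncard = Nat.card V - 1 := by
    rw [← Nat.card_coe_set_eq]; exact hT.2
  have hSpos : 0 < S.ncard := (Set.ncard_pos (Set.toFinite S)).mpr ⟨e, he⟩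
  have hV2 : 2 ≤ Nat.card V := by omega
  haveI : Nonempty V := (Nat.card_pos_iff.mp (by omega)).1
  obtain ⟨hnSxy, hSsides⟩ := MGAux.tree_sides hS he hxy
  have hconnU : MG.numComp ends (Set.univ : Set E) = 1 :=
    MGAux.numComp_eq_one (fun u v => MGAux.reach_mono (Set.subset_univ S) (hS.1 u v))
  have hSsub : S \ {e} ⊆ Dᶜ := by
    intro h hh
    intro hhD
    rcases hDsub hhD with h' | h'
    · exact hh.2 h'
    · exact h' hh.1
  have hnc : ∀ g, g ∉ D → ∀ a b, ends g = s(a, b) →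
      MG.Reach ends (S \ {e}) x a → MG.Reach ends (S \ {e}) x b := by
    intro g hgD a b hab hxa
    by_contra hxb
    have hyb : MG.Reach ends (S \ {e}) y b := (hSsides b).resolve_left hxb
    have hxyD : MG.Reach ends Dᶜ x y :=
      ((MGAux.reach_mono hSsub hxa).trans
        (Relation.ReflTransGen.single ⟨g, hgD, hab⟩)).trans
        (MGAux.reach_symm (MGAux.reach_mono hSsub hyb))
    have hconnD : MG.Conn ends Dᶜ :=
      MGAux.conn_of_sides hxyD
        (fun w => (hSsides w).imp (MGAux.reach_mono hSsub) (MGAux.reach_mono hSsub))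
    have h1 : MG.numComp ends Dᶜ = 1 := MGAux.numComp_eq_one hconnD
    have h2 : MG.numComp ends (Set.univ : Set E) < MG.numComp ends Dᶜ := hDcut
    omega
  have key : ∀ f, f ∈ D → f ∈ C → f ≠ e →
      f ∈ T ∧ MG.IsSpanningTree ends (insert f (S \ {e})) ∧
        MG.IsSpanningTree ends (insert e (T \ {f})) := by
    intro f hfD hfC hfe
    have hfS : f ∉ S := by
      rcases hDsub hfD with h' | h'
      · exact absurd h' hfe
      · exact h'
    have hfT : f ∈ T := by
      have : f ∈ S ∪ T := hU ▸ Set.mem_univ f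
      exact this.resolve_left hfS
    have hDf : ¬ MG.IsEdgeCut ends (D \ {f}) :=
      hDmin _ (Set.sdiff_singleton_ssubset.mpr hfD)
    have hle : ¬ (MG.numComp ends (Set.univ : Set E) < MG.numComp ends (D \ {f})ᶜ) := hDf
    have hge : MG.numComp ends (Set.univ : Set E) ≤ MG.numComp ends (D \ {f})ᶜ :=
      MGAux.numComp_le_of_subset (Set.subset_univ _)
    have h1 : MG.numComp ends (D \ {f})ᶜ = 1 := by omega
    have hreach : MG.Reach ends (D \ {f})ᶜ x y :=
      MGAux.conn_of_numComp_eq_one h1 x y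
    obtain ⟨g, hgF, a, b, hab, haA, hbA⟩ :=
      MGAux.exists_crossing (A := {w | MG.Reach ends (S \ {e}) x w}) hreach
        Relation.ReflTransGen.refl hnSxy
    have hgD : g ∈ D := by
      by_contra hgD
      exact hbA (hnc g hgD a b hab haA)
    have hgf : g = f := by
      by_contra hne
      exact hgF ⟨hgD, hne⟩
    subst hgf
    have hbB : MG.Reach ends (S \ {e}) y b := (hSsides b).resolve_left hbA
    have hfS' : g ∉ S \ {e} := fun h => hfS h.1
    have hconnS' : MG.Conn ends (insert g (S \ {e})) := by
      have hsub : S \ {e} ⊆ insert g (S \ {e}) := Set.subset_insert _ _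
      have hxyS' : MG.Reach ends (insert g (S \ {e})) x y :=
        ((MGAux.reach_mono hsub haA).trans
          (Relation.ReflTransGen.single ⟨g, Set.mem_insert _ _, hab⟩)).trans
          (MGAux.reach_symm (MGAux.reach_mono hsub hbB))
      exact MGAux.conn_of_sides hxyS'
        (fun w => (hSsides w).imp (MGAux.reach_mono hsub) (MGAux.reach_mono hsub))
    have hcardS' : Nat.card ↥(insert g (S \ {e})) = Nat.card V - 1 := by
      rw [Nat.card_coe_set_eq,
        Set.ncard_insert_of_notMem hfS' ((S \ {e}).toFinite),
        Set.ncard_diff_singleton_of_mem he]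
      omega
    have heT : e ∉ T := Set.disjoint_left.mp hd he
    have heT' : e ∉ T \ {g} := fun h => heT h.1
    obtain ⟨hnTab, hTsides⟩ := MGAux.tree_sides hT hfT hab
    have hCreach : MG.Reach ends (C \ {g}) a b :=
      MGAux.cycle_reach hloop hcyc hfC hab
    have hCsub' : C \ {g} ⊆ insert e (T \ {g}) := by
      rintro h ⟨hhC, hhf⟩
      rcases hCsub hhC with h' | h'
      · exact h' ▸ Set.mem_insert _ _
      · exact Set.mem_insert_of_mem _ ⟨h', hhf⟩
    have habT' : MG.Reach ends (insert e (T \ {g})) a b :=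
      MGAux.reach_mono hCsub' hCreach
    have hconnT' : MG.Conn ends (insert e (T \ {g})) :=
      MGAux.conn_of_sides habT'
        (fun w => (hTsides w).imp (MGAux.reach_mono (Set.subset_insert _ _))
          (MGAux.reach_mono (Set.subset_insert _ _)))
    have hcardT' : Nat.card ↥(insert e (T \ {g})) = Nat.card V - 1 := by
      rw [Nat.card_coe_set_eq,
        Set.ncard_insert_of_notMem heT' ((T \ {g}).toFinite),
        Set.ncard_diff_singleton_of_mem hfT]
      have hTpos : 0 < T.ncard := (Set.ncard_pos (Set.toFinite T)).mpr ⟨g, hfT⟩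
      omega
    exact ⟨hfT, ⟨hconnS', hcardS'⟩, ⟨hconnT', hcardT'⟩⟩
  have hxyCycle : MG.Reach ends (C \ {e}) x y :=
    MGAux.cycle_reach hloop hcyc heC hxy
  obtain ⟨g, hgCe, a, b, hab, haA, hbA⟩ :=
    MGAux.exists_crossing (A := {w | MG.Reach ends (S \ {e}) x w}) hxyCycle
      Relation.ReflTransGen.refl hnSxy
  have hgD : g ∈ D := by
    by_contra h
    exact hbA (hnc g h a b hab haA)
  obtain ⟨hgT, hst1, hst2⟩ := key g hgD hgCe.1 hgCe.2
  exact ⟨⟨g, hgT, hst1, hst2⟩, fun f hf hfe => key f hf.1 hf.2 hfe⟩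
end

section
/- Unique symmetric edge exchanges are reversible: if (S,T) are disjoint spanning trees of a bispanning graph G and (e,f) ∈ S × T satisfies D(S,e) ∩ C(T,e) = {e,f}, then for the pair (S' , T') = (S - e + f, T + e - f) one has D(S',f) ∩ C(T',f) = {e,f}, i.e. (f,e) is a unique exchange of (S',T') returning to (S,T). -/
namespace MG
variable {V E : Type*}

theorem adj_symm (ends : E → Sym2 V) (F : Set E) : Symmetric (Adj ends F) := by
  rintro u v ⟨g, hg, hgs⟩
  exact ⟨g, hg, by rw [hgs, Sym2.eq_swap]⟩

theorem reach_symm (ends : E → Sym2 V) (F : Set E) : Symmetric (Reach ends F) :=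
  fun _ _ h => by
    induction h with
    | refl => exact Relation.ReflTransGen.refl
    | tail _ hab ih => exact Relation.ReflTransGen.head (adj_symm ends F hab) ih

theorem reach_mono {ends : E → Sym2 V} {F F' : Set E} (h : F ⊆ F') {u v : V}
    (hr : Reach ends F u v) : Reach ends F' u v :=
  Relation.ReflTransGen.mono (r := Adj ends F) (p := Adj ends F') (fun _ _ ⟨g, hg, hgs⟩ => ⟨g, h hg, hgs⟩) u v hr

theorem reach_trans {ends : E → Sym2 V} {F : Set E} {u v w : V}
    (h1 : Reach ends F u v) (h2 : Reach ends F v w) : Reach ends F u w :=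
  Relation.ReflTransGen.trans h1 h2

theorem reach_insert_decomp {ends : E → Sym2 V} {F : Set E} {g : E} {x y : V}
    (hg : ends g = s(x, y)) {u v : V} (h : Reach ends (insert g F) u v) :
    Reach ends F u v ∨ (Reach ends F u x ∧ Reach ends F y v) ∨
      (Reach ends F u y ∧ Reach ends F x v) := by
  induction h with
  | refl => exact Or.inl Relation.ReflTransGen.refl
  | tail _ hadj ih =>
    obtain ⟨h', hh', hhs⟩ := hadj
    rcases hh' with rfl | hh'
    · -- the step uses g
      rw [hg, Sym2.eq_iff] at hhs
      rcases hhs with ⟨rfl, rfl⟩ | ⟨rfl, rfl⟩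
      · rcases ih with ih | ⟨h1, h2⟩ | ⟨h1, h2⟩
        · exact Or.inr (Or.inl ⟨ih, Relation.ReflTransGen.refl⟩)
        · exact Or.inr (Or.inl ⟨h1, Relation.ReflTransGen.refl⟩)
        · exact Or.inl h1
      · rcases ih with ih | ⟨h1, h2⟩ | ⟨h1, h2⟩
        · exact Or.inr (Or.inr ⟨ih, Relation.ReflTransGen.refl⟩)
        · exact Or.inl h1
        · exact Or.inr (Or.inr ⟨h1, Relation.ReflTransGen.refl⟩)
    · -- the step is an F-edge
      have step : Reach ends F _ _ := Relation.ReflTransGen.single ⟨h', hh', hhs⟩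
      rcases ih with ih | ⟨h1, h2⟩ | ⟨h1, h2⟩
      · exact Or.inl (reach_trans ih step)
      · exact Or.inr (Or.inl ⟨h1, reach_trans h2 step⟩)
      · exact Or.inr (Or.inr ⟨h1, reach_trans h2 step⟩)

theorem reach_reroute {ends : E → Sym2 V} {F : Set E} {g : E} {x y : V}
    (hg : ends g = s(x, y)) (hxy : Reach ends F x y) {u v : V}
    (h : Reach ends (insert g F) u v) : Reach ends F u v := by
  rcases reach_insert_decomp hg h with h | ⟨h1, h2⟩ | ⟨h1, h2⟩
  · exact h
  · exact reach_trans h1 (reach_trans hxy h2)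
  · exact reach_trans h1 (reach_trans (reach_symm ends F hxy) h2)

end MG

namespace MG
variable {V E : Type*}

theorem reach_equiv (ends : E → Sym2 V) (F : Set E) : Equivalence (Reach ends F) :=
  ⟨fun _ => Relation.ReflTransGen.refl, fun h => reach_symm ends F h, fun h1 h2 => reach_trans h1 h2⟩

theorem quot_mk_eq_iff (ends : E → Sym2 V) (F : Set E) (u v : V) :
    Quot.mk (Reach ends F) u = Quot.mk (Reach ends F) v ↔ Reach ends F u v := by
  rw [Quot.eq]
  exact Equivalence.eqvGen_iff (reach_equiv ends F)

theorem exists_ends (ends : E → Sym2 V) (g : E) : ∃ x y, ends g = s(x, y) :=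
  Sym2.ind (f := fun p => ∃ x y, p = s(x, y)) (fun x y => ⟨x, y, rfl⟩) (ends g)

theorem numComp_congr {ends : E → Sym2 V} {F F' : Set E}
    (h : ∀ u v, Reach ends F u v ↔ Reach ends F' u v) :
    numComp ends F = numComp ends F' := by
  have : Reach ends F = Reach ends F' := by
    funext u v; exact propext (h u v)
  rw [numComp, this, numComp]

theorem numComp_le_insert [Finite V] (ends : E → Sym2 V) (F : Set E) (g : E) :
    numComp ends F ≤ numComp ends (insert g F) + 1 := by
  classical
  obtain ⟨x, y, hg⟩ := exists_ends ends g
  set F' := insert g F with hF'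
  have hmap : ∀ u v, Reach ends F u v → Reach ends F' u v :=
    fun u v h => reach_mono (Set.subset_insert g F) h
  set φ : Quot (Reach ends F) → Quot (Reach ends F') := Quot.map id hmap with hφ
  have hφmk : ∀ u : V, φ (Quot.mk _ u) = Quot.mk _ u := fun u => rfl
  set ι : Quot (Reach ends F) → Quot (Reach ends F') ⊕ Unit :=
    fun a => if a = Quot.mk _ y then Sum.inr () else Sum.inl (φ a) with hι
  have hinj : Function.Injective ι := by
    intro a b hab
    induction a using Quot.ind with | _ u =>
    induction b using Quot.ind with | _ v =>
    by_cases ha : Quot.mk (Reach ends F) u = Quot.mk (Reach ends F) y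
    · by_cases hb : Quot.mk (Reach ends F) v = Quot.mk (Reach ends F) y
      · rw [ha, hb]
      · simp only [hι, ha, hb, if_pos rfl, if_neg hb] at hab
        exact absurd hab (by simp)
    · by_cases hb : Quot.mk (Reach ends F) v = Quot.mk (Reach ends F) y
      · simp only [hι, if_neg ha, hb, if_pos rfl] at hab
        exact absurd hab (by simp)
      · simp only [hι, if_neg ha, if_neg hb, Sum.inl.injEq] at hab
        rw [hφmk, hφmk, quot_mk_eq_iff] at hab
        rw [quot_mk_eq_iff] at ha hb ⊢
        rcases reach_insert_decomp hg hab with h | ⟨h1, h2⟩ | ⟨h1, h2⟩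
        · exact h
        · exact absurd (reach_symm ends F h2) hb
        · exact absurd h1 ha
  calc numComp ends F ≤ Nat.card (Quot (Reach ends F') ⊕ Unit) :=
        Nat.card_le_card_of_injective ι hinj
    _ = numComp ends F' + 1 := by simp [numComp, Nat.card_sum]

theorem card_le_numComp_add [Finite V] [Finite E] (ends : E → Sym2 V) (F : Set E) :
    Nat.card V ≤ numComp ends F + Nat.card F := by
  refine Set.Finite.induction_on (motive := fun F _ => Nat.card V ≤ numComp ends F + Nat.card ↥F)
    F (Set.toFinite F) ?_ ?_
  ·
    have : ∀ u v : V, Reach ends (∅ : Set E) u v ↔ u = v := by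
      intro u v
      constructor
      · intro h
        induction h with
        | refl => rfl
        | tail _ hadj _ => obtain ⟨g, hg, -⟩ := hadj; exact absurd hg (Set.notMem_empty g)
      · rintro rfl; exact Relation.ReflTransGen.refl
    have hbij : Function.Bijective (Quot.mk (Reach ends (∅ : Set E))) := by
      constructor
      · intro u v h
        rw [quot_mk_eq_iff, this] at h
        exact h
      · exact Quot.exists_rep
    have : Nat.card V = numComp ends (∅ : Set E) := Nat.card_eq_of_bijective _ hbij
    simp [← this]
  · intro g F' hg hfin ih
    have hcard : Nat.card ↥(insert g F') = Nat.card ↥F' + 1 := by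
      rw [Nat.card_coe_set_eq, Nat.card_coe_set_eq, Set.ncard_insert_of_notMem hg hfin]
    calc Nat.card V ≤ numComp ends F' + Nat.card ↥F' := ih
      _ ≤ (numComp ends (insert g F') + 1) + Nat.card ↥F' :=
          Nat.add_le_add_right (numComp_le_insert ends F' g) _
      _ = numComp ends (insert g F') + Nat.card ↥(insert g F') := by rw [hcard]; ring

theorem conn_numComp [Finite V] {ends : E → Sym2 V} {F : Set E} (h : Conn ends F) :
    numComp ends F ≤ 1 := by
  have : Subsingleton (Quot (Reach ends F)) := by
    constructor
    intro a b
    induction a using Quot.ind with | _ u =>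
    induction b using Quot.ind with | _ v =>
    exact Quot.sound (h u v)
  rcases isEmpty_or_nonempty (Quot (Reach ends F)) with hne | hne
  · simp [numComp, Nat.card_of_isEmpty]
  · exact le_of_eq Nat.card_unique

theorem one_le_numComp [Finite V] [Nonempty V] (ends : E → Sym2 V) (F : Set E) :
    1 ≤ numComp ends F := by
  have : Nonempty (Quot (Reach ends F)) := ⟨Quot.mk _ (Classical.arbitrary V)⟩
  exact Nat.one_le_iff_ne_zero.mpr (Nat.card_ne_zero.mpr ⟨this, Quot.finite _⟩)

end MG

namespace MG
variable {V E : Type*}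

theorem natCard_setOf [Fintype E] (p : E → Prop) [DecidablePred p] :
    Nat.card {e | p e} = (Finset.univ.filter p).card := by
  rw [Nat.card_coe_set_eq, Set.ncard_eq_toFinset_card', Set.toFinset_setOf]

theorem mem_ends_iff {ends : E → Sym2 V} {g : E} {x y w : V} (hg : ends g = s(x, y)) :
    w ∈ ends g ↔ w = x ∨ w = y := by rw [hg, Sym2.mem_iff]

theorem ne_of_ends {ends : E → Sym2 V} (hloop : ∀ e : E, ¬ (ends e).IsDiag)
    {g : E} {x y : V} (hg : ends g = s(x, y)) : x ≠ y := by
  intro h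
  exact hloop g (by rw [hg, Sym2.mk_isDiag_iff]; exact h)

theorem cycle_reach [Finite V] [Finite E] {ends : E → Sym2 V}
    (hloop : ∀ e : E, ¬ (ends e).IsDiag) {C : Set E} (hC : IsCycle ends C)
    {g : E} (hg : g ∈ C) {x y : V} (hxy : ends g = s(x, y)) :
    Reach ends (C \ {g}) x y := by
  classical
  haveI : Fintype V := Fintype.ofFinite V
  haveI : Fintype E := Fintype.ofFinite E
  by_contra hn
  have hxny : x ≠ y := ne_of_ends hloop hxy
  set X : Set V := {w | Reach ends (C \ {g}) x w} with hX
  have hxX : x ∈ X := Relation.ReflTransGen.refl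
  have hyX : y ∉ X := hn
  have hclosed : ∀ h ∈ C \ ({g} : Set E), ∀ a b, ends h = s(a, b) → (a ∈ X ↔ b ∈ X) := by
    have key : ∀ h ∈ C \ ({g} : Set E), ∀ a b, ends h = s(a, b) → a ∈ X → b ∈ X := by
      intro h hh a b hab ha
      exact reach_trans ha (Relation.ReflTransGen.single ⟨h, hh, hab⟩)
    intro h hh a b hab
    exact ⟨key h hh a b hab, key h hh b a (by rw [hab, Sym2.eq_swap])⟩
  have hinc : ∀ w ∈ X, ∃ h ∈ C, w ∈ ends h := by
    intro w hw
    rw [hX, Set.mem_setOf_eq] at hw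
    rcases Relation.ReflTransGen.cases_tail hw with heq | ⟨c, _, hcw⟩
    · exact ⟨g, hg, by rw [heq, hxy]; exact Sym2.mem_mk_left x y⟩
    · obtain ⟨h, hh, hhs⟩ := hcw
      exact ⟨h, hh.1, by rw [hhs]; exact Sym2.mem_mk_right c w⟩
  set Xf : Finset V := Finset.univ.filter (· ∈ X) with hXf
  set Cf : Finset E := Finset.univ.filter (fun h => h ∈ C \ ({g} : Set E)) with hCf
  set N : ℕ := ∑ w ∈ Xf, (Cf.filter (fun h => w ∈ ends h)).card with hN
  -- N is even: count by edges
  have hswap : N = ∑ h ∈ Cf, (Xf.filter (fun w => w ∈ ends h)).card := by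
    rw [hN]
    simp only [Finset.card_filter]
    exact Finset.sum_comm
  have heven : 2 ∣ N := by
    rw [hswap]
    refine Finset.dvd_sum ?_
    intro h hh
    rw [hCf, Finset.mem_filter] at hh
    obtain ⟨a, b, hab⟩ := exists_ends ends h
    have hanb : a ≠ b := ne_of_ends hloop hab
    have hiff := hclosed h hh.2 a b hab
    by_cases ha : a ∈ X
    · have hb : b ∈ X := hiff.mp ha
      have : Xf.filter (fun w => w ∈ ends h) = {a, b} := by
        ext w
        simp only [hXf, Finset.mem_filter, Finset.mem_univ, true_and, mem_ends_iff hab,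
          Finset.mem_insert, Finset.mem_singleton]
        constructor
        · rintro ⟨_, h2⟩; exact h2
        · rintro (rfl | rfl)
          · exact ⟨ha, Or.inl rfl⟩
          · exact ⟨hb, Or.inr rfl⟩
      rw [this, Finset.card_insert_of_notMem (by simpa using hanb), Finset.card_singleton]
    · have hb : b ∉ X := fun hb => ha (hiff.mpr hb)
      have : Xf.filter (fun w => w ∈ ends h) = ∅ := by
        ext w
        simp only [hXf, Finset.mem_filter, Finset.mem_univ, true_and, mem_ends_iff hab,
          Finset.notMem_empty, iff_false, not_and]
        rintro hw (rfl | rfl)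
        · exact ha hw
        · exact hb hw
      rw [this, Finset.card_empty]
      exact dvd_zero 2
  -- N is odd: count by vertices
  have hterm : ∀ w ∈ Xf, (Cf.filter (fun h => w ∈ ends h)).card
      = if w = x then 1 else 2 := by
    intro w hw
    rw [hXf, Finset.mem_filter] at hw
    have hwX : w ∈ X := hw.2
    have hfull : (Finset.univ.filter (fun h => h ∈ C ∧ w ∈ ends h)).card = 2 := by
      rw [← natCard_setOf]
      exact hC.2.2 w (hinc w hwX)
    have herase : Cf.filter (fun h => w ∈ ends h)
        = (Finset.univ.filter (fun h => h ∈ C ∧ w ∈ ends h)).erase g := by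
      ext h
      simp only [hCf, Finset.filter_filter, Finset.mem_filter, Finset.mem_univ, true_and,
        Finset.mem_erase, Set.mem_diff, Set.mem_singleton_iff]
      tauto
    rw [herase]
    by_cases hwx : w = x
    · rw [if_pos hwx, Finset.card_erase_of_mem, hfull]
      rw [Finset.mem_filter]
      exact ⟨Finset.mem_univ g, hg, by rw [hwx, hxy]; exact Sym2.mem_mk_left x y⟩
    · rw [if_neg hwx, Finset.erase_eq_of_notMem, hfull]
      rw [Finset.mem_filter]
      rintro ⟨-, -, hwg⟩
      rcases (mem_ends_iff hxy).mp hwg with rfl | rfl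
      · exact hwx rfl
      · exact hyX hwX
  have hxXf : x ∈ Xf := by rw [hXf, Finset.mem_filter]; exact ⟨Finset.mem_univ x, hxX⟩
  have hodd : N = 2 * (Xf.erase x).card + 1 := by
    rw [hN, ← Finset.add_sum_erase _ _ hxXf, hterm x hxXf, if_pos rfl]
    have : ∀ w ∈ Xf.erase x, (Cf.filter (fun h => w ∈ ends h)).card = 2 := by
      intro w hw
      rw [Finset.mem_erase] at hw
      rw [hterm w hw.2, if_neg hw.1]
    rw [Finset.sum_congr rfl this, Finset.sum_const, smul_eq_mul]
    ring
  obtain ⟨k, hk⟩ := heven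
  omega

end MG

namespace MG
variable {V E : Type*}

theorem card_coe (F : Set E) : Nat.card ↥F = F.ncard := Nat.card_coe_set_eq F

theorem no_cycle [Finite V] [Finite E] {ends : E → Sym2 V}
    (hloop : ∀ e : E, ¬ (ends e).IsDiag) {F : Set E} (hconn : Conn ends F)
    (hcard : Nat.card ↥F = Nat.card V - 1) {C : Set E} (hCF : C ⊆ F)
    (hC : IsCycle ends C) : False := by
  obtain ⟨g, hgC⟩ := hC.1
  obtain ⟨x, y, hgends⟩ := exists_ends ends g
  have hxny : x ≠ y := ne_of_ends hloop hgends
  have hgF : g ∈ F := hCF hgC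
  have hV2 : 2 ≤ Nat.card V := by
    have : Nontrivial V := ⟨x, y, hxny⟩
    exact Finite.one_lt_card_iff_nontrivial.mpr this
  have hreach : Reach ends (F \ {g}) x y :=
    reach_mono (Set.diff_subset_diff_left hCF) (cycle_reach hloop hC hgC hgends)
  have hconn' : Conn ends (F \ {g}) := by
    intro u v
    have h1 : Reach ends (insert g (F \ {g})) u v := by
      rw [Set.insert_diff_singleton, Set.insert_eq_self.mpr hgF]
      exact hconn u v
    exact reach_reroute hgends hreach h1
  have hcard' : Nat.card ↥(F \ {g}) = Nat.card V - 2 := by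
    rw [card_coe, Set.ncard_diff_singleton_of_mem hgF, ← card_coe, hcard]
    omega
  have hle := card_le_numComp_add ends (F \ {g})
  have hnc := conn_numComp hconn'
  omega

theorem cycle_subset [Finite V] [Finite E] {ends : E → Sym2 V}
    (hloop : ∀ e : E, ¬ (ends e).IsDiag) {T : Set E} (hT : IsSpanningTree ends T)
    {e : E} (heT : e ∉ T) {C C' : Set E} (hC : IsCycle ends C) (hC' : IsCycle ends C')
    (hCs : C ⊆ insert e T) (hC's : C' ⊆ insert e T) (heC' : e ∈ C') : C ⊆ C' := by
  intro g hgC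
  by_contra hgC'
  obtain ⟨x, y, hgends⟩ := exists_ends ends g
  have hgT : g ∈ insert e T := hCs hgC
  set F : Set E := insert e T \ {g} with hF
  have hCF : C \ {g} ⊆ F := Set.diff_subset_diff_left hCs
  have hreach : Reach ends F x y := reach_mono hCF (cycle_reach hloop hC hgC hgends)
  have hconn : Conn ends F := by
    intro u v
    have h1 : Reach ends (insert g F) u v := by
      rw [hF, Set.insert_diff_singleton, Set.insert_eq_self.mpr hgT]
      exact reach_mono (Set.subset_insert e T) (hT.1 u v)
    exact reach_reroute hgends hreach h1
  have hcard : Nat.card ↥F = Nat.card V - 1 := by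
    rw [card_coe, hF, Set.ncard_diff_singleton_of_mem hgT,
      Set.ncard_insert_of_notMem heT, ← card_coe, hT.2]
    omega
  exact no_cycle hloop hconn hcard
    (fun h hh => Set.mem_diff_singleton.mpr ⟨hC's hh, fun he => hgC' (he ▸ hh)⟩) hC'

theorem cycle_unique [Finite V] [Finite E] {ends : E → Sym2 V}
    (hloop : ∀ e : E, ¬ (ends e).IsDiag) {T : Set E} (hT : IsSpanningTree ends T)
    {e : E} (heT : e ∉ T) {C C' : Set E} (hC : IsCycle ends C) (hC' : IsCycle ends C')
    (hCs : C ⊆ insert e T) (hC's : C' ⊆ insert e T) (heC : e ∈ C) (heC' : e ∈ C') :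
    C = C' :=
  Set.Subset.antisymm (cycle_subset hloop hT heT hC hC' hCs hC's heC')
    (cycle_subset hloop hT heT hC' hC hC's hCs heC)

theorem cut_eq [Finite V] [Finite E] {ends : E → Sym2 V} {A : Set E} {x y : V}
    (hA2 : ∀ u, Reach ends A u x ∨ Reach ends A u y) (hxy : ¬ Reach ends A x y)
    {D : Set E} (hsub : D ⊆ Aᶜ) (hmin : IsMinEdgeCut ends D) :
    D = {g | ∀ a b, ends g = s(a, b) → ¬ Reach ends A a b} := by
  haveI : Nonempty V := ⟨x⟩
  have hDc2 : 2 ≤ numComp ends Dᶜ := by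
    have h1 := hmin.1
    have h2 := one_le_numComp ends (Set.univ : Set E)
    rw [IsEdgeCut] at h1
    omega
  have hAD : ∀ u v, Reach ends A u v → Reach ends Dᶜ u v :=
    fun u v h => reach_mono (Set.subset_compl_comm.mp hsub) h
  have hxyD : ¬ Reach ends Dᶜ x y := by
    intro h
    have hconn : Conn ends Dᶜ := by
      intro u v
      rcases hA2 u with hu | hu <;> rcases hA2 v with hv | hv
      · exact reach_trans (hAD u x hu) (reach_symm ends Dᶜ (hAD v x hv))
      · exact reach_trans (hAD u x hu) (reach_trans h (reach_symm ends Dᶜ (hAD v y hv)))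
      · exact reach_trans (hAD u y hu)
          (reach_trans (reach_symm ends Dᶜ h) (reach_symm ends Dᶜ (hAD v x hv)))
      · exact reach_trans (hAD u y hu) (reach_symm ends Dᶜ (hAD v y hv))
    have := conn_numComp hconn
    omega
  ext g
  constructor
  · intro hgD a b hgab hab
    by_contra
    -- show D \ {g} is still an edge cut, contradicting minimality
    refine hmin.2 (D \ {g}) (Set.sdiff_singleton_ssubset.mpr hgD) ?_
    have hcompl : (D \ {g})ᶜ = insert g Dᶜ := by
      ext h
      by_cases hh : h = g <;> simp [hh]
    have habD : Reach ends Dᶜ a b := hAD a b hab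
    have hnum : numComp ends (D \ {g})ᶜ = numComp ends Dᶜ := by
      rw [hcompl]
      refine numComp_congr ?_
      intro u v
      exact ⟨fun h => reach_reroute hgab habD h, fun h => reach_mono (Set.subset_insert _ _) h⟩
    rw [IsEdgeCut, hnum]
    exact hmin.1
  · intro hgK
    by_contra hgD
    obtain ⟨a, b, hgab⟩ := exists_ends ends g
    have hnab : ¬ Reach ends A a b := hgK a b hgab
    have hadj : Reach ends Dᶜ a b := Relation.ReflTransGen.single ⟨g, hgD, hgab⟩
    rcases hA2 a with ha | ha <;> rcases hA2 b with hb | hb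
    · exact hnab (reach_trans ha (reach_symm ends A hb))
    · exact hxyD (reach_trans (reach_symm ends Dᶜ (hAD a x ha))
        (reach_trans hadj (hAD b y hb)))
    · exact hxyD (reach_symm ends Dᶜ (reach_trans (reach_symm ends Dᶜ (hAD a y ha))
        (reach_trans hadj (hAD b x hb))))
    · exact hnab (reach_trans ha (reach_symm ends A hb))

end MG


/-- Unique symmetric edge exchanges are reversible: if `(e,f) ∈ S × T` with
`D(S,e) ∩ C(T,e) = {e,f}`, then for `S' = S - e + f`, `T' = T + e - f` one has
`D(S',f) ∩ C(T',f) = {e,f}`, i.e. `(f,e)` is a unique exchange returning to `(S,T)`. -/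
theorem unique_exchange_reversible {V E : Type*} [Finite V] [Finite E]
    (ends : E → Sym2 V) (hloop : ∀ e : E, ¬ (ends e).IsDiag)
    (S T : Set E) (hU : S ∪ T = Set.univ) (hd : Disjoint S T)
    (hS : MG.IsSpanningTree ends S) (hT : MG.IsSpanningTree ends T)
    (e f : E) (he : e ∈ S) (hf : f ∈ T)
    (D C : Set E)
    (hD : MG.IsFundCut ends S e D) (hC : MG.IsFundCycle ends T e C)
    (hUE : D ∩ C = {e, f})
    (D' C' : Set E)
    (hD' : MG.IsFundCut ends (insert f (S \ {e})) f D')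
    (hC' : MG.IsFundCycle ends (insert e (T \ {f})) f C') :
    D' ∩ C' = {e, f} := by
  classical
  have heT : e ∉ T := fun h => (Set.disjoint_left.mp hd he) h
  have hfS : f ∉ S := fun h => (Set.disjoint_left.mp hd h) hf
  obtain ⟨x, y, hg⟩ := MG.exists_ends ends e
  have hxny : x ≠ y := MG.ne_of_ends hloop hg
  have hV2 : 2 ≤ Nat.card V :=
    Finite.one_lt_card_iff_nontrivial.mpr ⟨x, y, hxny⟩
  set A : Set E := S \ {e} with hA
  have hSA : S = insert e A := by
    rw [hA, Set.insert_diff_singleton, Set.insert_eq_self.mpr he]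
  -- the two sides of the tree S minus e
  have hA2 : ∀ u, MG.Reach ends A u x ∨ MG.Reach ends A u y := by
    intro u
    have h1 : MG.Reach ends (insert e A) u x := by rw [← hSA]; exact hS.1 u x
    rcases MG.reach_insert_decomp hg h1 with h | ⟨h1, _⟩ | ⟨h1, _⟩
    · exact Or.inl h
    · exact Or.inl h1
    · exact Or.inr h1
  have hxy : ¬ MG.Reach ends A x y := by
    intro hr
    have hconn : MG.Conn ends A := by
      intro u v
      have h1 : MG.Reach ends (insert e A) u v := by rw [← hSA]; exact hS.1 u v
      exact MG.reach_reroute hg hr h1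
    have hcardA : Nat.card ↥A = Nat.card V - 2 := by
      rw [MG.card_coe, hA, Set.ncard_diff_singleton_of_mem he, ← MG.card_coe, hS.2]
      omega
    have hle := MG.card_le_numComp_add ends A
    have hnc := MG.conn_numComp hconn
    omega
  -- identify both cuts with the set of edges crossing the two sides
  have hAc : insert e Sᶜ = Aᶜ := by
    ext h
    by_cases hh : h = e <;> simp [hA, hh, he]
  have hAc' : insert f (insert f (S \ {e}))ᶜ = Aᶜ := by
    ext h
    have hfA : f ∉ A := fun hh => hfS hh.1
    by_cases hh : h = f <;> simp [hA, hh, hfS] <;> tauto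
  have hDK := MG.cut_eq hA2 hxy (hAc ▸ hD.1) hD.2.2
  have hDK' := MG.cut_eq hA2 hxy (hAc' ▸ hD'.1) hD'.2.2
  have hDD : D' = D := by rw [hDK, hDK']
  -- identify both cycles
  have hTs : insert f (insert e (T \ {f})) = insert e T := by
    ext h
    by_cases hh : h = f <;> simp [hh, hf] <;> tauto
  have hC's : C' ⊆ insert e T := hTs ▸ hC'.1
  have heC' : e ∈ C' := by
    by_contra heC'
    have hsub : C' ⊆ T := by
      intro h hh
      rcases hC's hh with rfl | hh'
      · exact absurd hh heC'
      · exact hh'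
    exact MG.no_cycle hloop hT.1 hT.2 hsub hC'.2.2
  have hCC : C = C' :=
    MG.cycle_unique hloop hT heT hC.2.2 hC'.2.2 hC.1 hC's hC.2.1 heC'
  rw [hDD, ← hCC, hUE]
end

section
/- If v is a leaf of the spanning tree S in a bispanning graph with disjoint spanning trees S ⊔ T = E, incident to the unique S-edge e, then e admits a unique symmetric edge exchange: |D(S,e) ∩ C(T,e)| = 2. -/
section Aux

variable {V E : Type*}

lemma aux_adj_symm (ends : E → Sym2 V) (F : Set E) : Symmetric (MG.Adj ends F) := by
  rintro u w ⟨f, hf, h⟩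
  exact ⟨f, hf, h.trans (Sym2.eq_swap)⟩

lemma aux_reach_symm (ends : E → Sym2 V) (F : Set E) {u w : V}
    (h : MG.Reach ends F u w) : MG.Reach ends F w u :=
  by
    haveI : Std.Symm (MG.Adj ends F) := ⟨fun _ _ h => aux_adj_symm ends F h⟩
    exact (Relation.ReflTransGen.symmetric (r := MG.Adj ends F)).symm _ _ h

lemma aux_reach_mono (ends : E → Sym2 V) {F F' : Set E} (hFF : F ⊆ F') {u w : V}
    (h : MG.Reach ends F u w) : MG.Reach ends F' u w :=
  Relation.ReflTransGen.mono (fun a b (⟨f, hf, hab⟩ : MG.Adj ends F a b) => (⟨f, hFF hf, hab⟩ : MG.Adj ends F' a b)) _ _ h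

lemma aux_conn_numComp [Finite V] (ends : E → Sym2 V) (F : Set E)
    (h : MG.Conn ends F) (hne : Nonempty V) : MG.numComp ends F = 1 := by
  haveI : Nonempty (Quot (MG.Reach ends F)) := ⟨Quot.mk _ hne.some⟩
  rw [MG.numComp, Nat.card_eq_one_iff_unique]
  refine ⟨⟨fun a b => ?_⟩, ⟨Quot.mk _ hne.some⟩⟩
  induction a using Quot.ind
  induction b using Quot.ind
  exact Quot.sound (h _ _)

lemma aux_numComp_pos [Finite V] (ends : E → Sym2 V) (F : Set E) (hne : Nonempty V) :
    0 < MG.numComp ends F := by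
  haveI : Nonempty (Quot (MG.Reach ends F)) := ⟨Quot.mk _ hne.some⟩
  have : Finite (Quot (MG.Reach ends F)) :=
    Finite.of_surjective (Quot.mk _) (fun q => q.exists_rep)
  exact Nat.card_pos (α := Quot (MG.Reach ends F))

/-- Adding an edge whose endpoints are already connected does not change reachability. -/
lemma aux_insert_edge (ends : E → Sym2 V) (F : Set E) (f : E) {x y : V}
    (hf : ends f = s(x, y)) (hxy : MG.Reach ends F x y) {u w : V}
    (h : MG.Reach ends (insert f F) u w) : MG.Reach ends F u w := by
  induction h with
  | refl => exact .refl
  | tail _ hadj ih =>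
    obtain ⟨g, hg, hgpq⟩ := hadj
    rcases hg with hg | hg
    · subst hg
      rw [hf, Sym2.eq_iff] at hgpq
      rcases hgpq with ⟨h1, h2⟩ | ⟨h1, h2⟩
      · exact ih.trans (h1 ▸ h2 ▸ hxy)
      · exact ih.trans (h1 ▸ h2 ▸ aux_reach_symm ends F hxy)
    · exact ih.tail ⟨g, hg, hgpq⟩

end Aux

/-- If `v` is a leaf of the spanning tree `S` of a bispanning graph, incident to the
unique `S`-edge `e`, then `e` admits a unique symmetric edge exchange:
`|D(S,e) ∩ C(T,e)| = 2`. -/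
theorem leaf_unique_exchange {V E : Type*} [Finite V] [Finite E]
    (ends : E → Sym2 V) (hloop : ∀ e : E, ¬ (ends e).IsDiag)
    (S T : Set E) (hU : S ∪ T = Set.univ) (hd : Disjoint S T)
    (hS : MG.IsSpanningTree ends S) (hT : MG.IsSpanningTree ends T)
    (v : V) (e : E) (he : e ∈ S)
    (hleaf : {e' : E | e' ∈ S ∧ v ∈ ends e'} = {e})
    (D : Set E) (hD : MG.IsFundCut ends S e D)
    (C : Set E) (hC : MG.IsFundCycle ends T e C) :
    Nat.card ↥(D ∩ C) = 2 := by
  classical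
  obtain ⟨hDsub, heD, hDcut, hDmin⟩ := hD
  obtain ⟨hCsub, heC, hCne, hCconn, hCdeg⟩ := hC
  -- v is an endpoint of e, and e is the unique S-edge at v
  have hv : v ∈ ends e := ((Set.ext_iff.mp hleaf e).mpr rfl).2
  have huniq : ∀ f, f ∈ S → v ∈ ends f → f = e := fun f hf hvf =>
    (Set.ext_iff.mp hleaf f).mp ⟨hf, hvf⟩
  -- the other endpoint of e
  set a := Sym2.Mem.other hv with ha_def
  have hea : ends e = s(v, a) := (Sym2.other_spec hv).symm
  have hav : a ≠ v := by
    intro h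
    exact hloop e (by rw [hea, h]; exact Sym2.mk_isDiag_iff.mpr rfl)
  -- S \ {e} connects any two vertices different from v (via a retraction φ)
  set φ : V → V := fun x => if x = v then a else x with hφ
  have key : ∀ u w : V, MG.Reach ends S u w → MG.Reach ends (S \ {e}) (φ u) (φ w) := by
    intro u w h
    induction h with
    | refl => exact .refl
    | @tail x w _ hadj ih =>
      obtain ⟨f, hfS, hfxw⟩ := hadj
      by_cases hfe : f = e
      · subst hfe
        rw [hea, Sym2.eq_iff] at hfxw
        have : φ x = φ w := by
          rcases hfxw with ⟨h1, h2⟩ | ⟨h1, h2⟩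
          · simp [hφ, ← h1, ← h2, hav]
          · simp [hφ, ← h1, ← h2, hav]
        exact this ▸ ih
      · have hxv : x ≠ v := by
          intro h; subst h
          exact hfe (huniq f hfS (hfxw ▸ Sym2.mem_mk_left x w))
        have hwv : w ≠ v := by
          intro h; subst h
          exact hfe (huniq f hfS (hfxw ▸ Sym2.mem_mk_right x w))
        have : MG.Adj ends (S \ {e}) (φ x) (φ w) := by
          refine ⟨f, ⟨hfS, hfe⟩, ?_⟩
          simp [hφ, hxv, hwv, hfxw]
        exact ih.tail this
  have keyne : ∀ u w : V, u ≠ v → w ≠ v → MG.Reach ends (S \ {e}) u w := by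
    intro u w hu hw
    have := key u w (hS.1 u w)
    simpa [hφ, hu, hw] using this
  -- edges of S other than e avoid D
  have hSD : S \ {e} ⊆ Dᶜ := by
    rintro f ⟨hfS, hfe⟩ hfD
    rcases hDsub hfD with h | h
    · exact hfe h
    · exact h hfS
  have hne : Nonempty V := ⟨v⟩
  have hconn_univ : MG.numComp ends (Set.univ : Set E) = 1 :=
    aux_conn_numComp ends _ (fun u w => aux_reach_mono ends (Set.subset_univ S) (hS.1 u w)) hne
  -- Claim: D ∩ C = edges of C incident to v
  have hset : D ∩ C = {f : E | f ∈ C ∧ v ∈ ends f} := by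
    ext f
    constructor
    · rintro ⟨hfD, hfC⟩
      refine ⟨hfC, ?_⟩
      by_contra hvf
      -- f ≠ e since v ∈ ends e
      have hfe : f ≠ e := fun h => hvf (h ▸ hv)
      -- endpoints of f
      obtain ⟨x, y, hfxy⟩ : ∃ x y, ends f = s(x, y) :=
        Sym2.ind (f := fun z => ∃ x y, z = s(x, y)) (fun x y => ⟨x, y, rfl⟩) (ends f)
      have hxv : x ≠ v := fun h => hvf (h ▸ hfxy ▸ Sym2.mem_mk_left x y)
      have hyv : y ≠ v := fun h => hvf (h ▸ hfxy ▸ Sym2.mem_mk_right x y)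
      have hxy : MG.Reach ends Dᶜ x y :=
        aux_reach_mono ends hSD (keyne x y hxv hyv)
      -- removing f from D yields the same reachability, contradicting minimality
      have hcompl : (D \ {f})ᶜ = insert f Dᶜ := by
        ext g
        by_cases hgf : g = f <;> simp [hgf, hfD]
      have hRel : MG.Reach ends (D \ {f})ᶜ = MG.Reach ends Dᶜ := by
        funext p q
        apply propext
        constructor
        · intro h
          exact aux_insert_edge ends Dᶜ f hfxy hxy (hcompl ▸ h)
        · intro h
          exact aux_reach_mono ends (by rw [hcompl]; exact Set.subset_insert f Dᶜ) h
      have hssub : D \ {f} ⊂ D := Set.sdiff_singleton_ssubset.mpr hfD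
      have hnum : MG.numComp ends (D \ {f})ᶜ = MG.numComp ends Dᶜ := by
        rw [MG.numComp, MG.numComp, hRel]
      have hnotcut := hDmin (D \ {f}) hssub
      rw [MG.IsEdgeCut, hnum] at hnotcut
      exact hnotcut hDcut
    · rintro ⟨hfC, hvf⟩
      constructor
      · -- f incident to v must be in D, else Dᶜ connects everything
        by_contra hfD
        have hw := Sym2.Mem.other hvf
        have hfvw : ends f = s(v, Sym2.Mem.other hvf) := (Sym2.other_spec hvf).symm
        set b := Sym2.Mem.other hvf with hb
        have hbv : b ≠ v := by
          intro h
          exact hloop f (by rw [hfvw, h]; exact Sym2.mk_isDiag_iff.mpr rfl)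
        have hconn : MG.Conn ends Dᶜ := by
          intro p q
          have reach_to_v : ∀ z : V, MG.Reach ends Dᶜ z v := by
            intro z
            by_cases hz : z = v
            · exact hz ▸ .refl
            · have h1 : MG.Reach ends (S \ {e}) z b := keyne z b hz hbv
              have h2 : MG.Reach ends Dᶜ z b := aux_reach_mono ends hSD h1
              exact h2.tail ⟨f, hfD, by rw [hfvw, Sym2.eq_swap]⟩
          exact (reach_to_v p).trans (aux_reach_symm ends Dᶜ (reach_to_v q))
        have := hDcut
        rw [MG.IsEdgeCut, hconn_univ, aux_conn_numComp ends Dᶜ hconn hne] at this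
        exact lt_irrefl 1 this
      · exact hfC
  rw [hset]
  exact hCdeg v ⟨e, heC, hv⟩
end

section
/- Double-attach preserves bispanning: if G = (V,E) is bispanning, v ∉ V a new vertex, and x, y ∈ V (not necessarily distinct) vertices of G, then the graph obtained from G by adding v with new edges {x,v} and {y,v} is bispanning. -/
open MG in
private lemma attach_tree {V E : Type*} [Finite V] [Finite E]
    (ends : E → Sym2 V) (ne' : E ⊕ Fin 2 → Sym2 (Option V))
    (hlift : ∀ e : E, ne' (Sum.inl e) = (ends e).map some)
    (F : Set E) (i : Fin 2) (z : V) (hi : ne' (Sum.inr i) = s(some z, none))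
    (hF : MG.IsSpanningTree ends F) :
    MG.IsSpanningTree ne' (Sum.inl '' F ∪ {Sum.inr i}) := by
  obtain ⟨hc, hcard⟩ := hF
  have hz : Nonempty V := ⟨z⟩
  set F' : Set (E ⊕ Fin 2) := Sum.inl '' F ∪ {Sum.inr i} with hF'
  have hadj : ∀ u v : V, Adj ends F u v → Adj ne' F' (some u) (some v) := by
    rintro u v ⟨e, heF, hee⟩
    exact ⟨Sum.inl e, Or.inl ⟨e, heF, rfl⟩, by rw [hlift, hee]; rfl⟩
  have hreach : ∀ u v : V, Reach ne' F' (some u) (some v) := fun u v =>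
    Relation.ReflTransGen.lift some (fun a b hab => hadj a b hab) _ _ (hc u v)
  have hadjz : Adj ne' F' (none) (some z) :=
    ⟨Sum.inr i, Or.inr rfl, by rw [hi, Sym2.eq_swap]⟩
  have hsymm : Symmetric (Adj ne' F') := by
    rintro a b ⟨e, he, hee⟩
    exact ⟨e, he, by rw [hee, Sym2.eq_swap]⟩
  have hnone : ∀ v : V, Reach ne' F' none (some v) := fun v =>
    (Relation.ReflTransGen.single hadjz).trans (hreach z v)
  constructor
  · intro u v
    match u, v with
    | none, none => exact Relation.ReflTransGen.refl
    | none, some v => exact hnone v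
    | some u, none => exact (@Relation.ReflTransGen.symmetric _ _ ⟨fun a b h => hsymm h⟩).symm _ _ (hnone u)
    | some u, some v => exact hreach u v
  · have h1 : Sum.inr i ∉ Sum.inl '' F := by rintro ⟨e, -, h⟩; exact Sum.inl_ne_inr h
    have : F' = insert (Sum.inr i) (Sum.inl '' F) := by
      rw [hF', Set.union_singleton]
    rw [Nat.card_coe_set_eq, this, Set.ncard_insert_of_notMem h1,
      Set.ncard_image_of_injective _ Sum.inl_injective, Finite.card_option,
      ← Nat.card_coe_set_eq, hcard]
    have : 1 ≤ Nat.card V := Nat.one_le_iff_ne_zero.mpr (Nat.card_ne_zero.mpr ⟨hz, ‹_›⟩)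
    omega

/-- Double-attach preserves bispanning: attaching a new vertex to `x, y ∈ V` by two
new edges yields a bispanning graph. -/
theorem double_attach_bispanning {V E : Type*} [Finite V] [Finite E]
    (ends : E → Sym2 V) (hloop : ∀ e : E, ¬ (ends e).IsDiag)
    (h : MG.Bispanning ends) (x y : V) :
    MG.Bispanning (V := Option V) (E := E ⊕ Fin 2)
      (Sum.elim (fun e => (ends e).map some)
        (fun i => if i = 0 then s(some x, (none : Option V)) else s(some y, none))) := by
  obtain ⟨S, T, hunion, hdisj, hS, hT⟩ := h
  set ne' : E ⊕ Fin 2 → Sym2 (Option V) :=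
    Sum.elim (fun e => (ends e).map some)
      (fun i => if i = 0 then s(some x, (none : Option V)) else s(some y, none)) with hne
  refine ⟨Sum.inl '' S ∪ {Sum.inr 0}, Sum.inl '' T ∪ {Sum.inr 1}, ?_, ?_, ?_, ?_⟩
  · ext e
    simp only [Set.mem_union, Set.mem_image, Set.mem_singleton_iff, Set.mem_univ, iff_true]
    match e with
    | Sum.inl e =>
      have : e ∈ S ∪ T := hunion ▸ Set.mem_univ e
      rcases this with h | h
      · exact Or.inl (Or.inl ⟨e, h, rfl⟩)
      · exact Or.inr (Or.inl ⟨e, h, rfl⟩)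
    | Sum.inr i =>
      fin_cases i
      · exact Or.inl (Or.inr rfl)
      · exact Or.inr (Or.inr rfl)
  · rw [Set.disjoint_union_left]
    constructor
    · rw [Set.disjoint_union_right]
      refine ⟨(Set.disjoint_image_iff Sum.inl_injective).mpr hdisj, ?_⟩
      rw [Set.disjoint_singleton_right]
      rintro ⟨e, -, he⟩; exact Sum.inl_ne_inr he
    · rw [Set.disjoint_union_right]
      constructor
      · rw [Set.disjoint_singleton_left]
        rintro ⟨e, -, he⟩; exact Sum.inl_ne_inr he
      · simp
  · exact attach_tree ends ne' (fun e => rfl) S 0 x (by simp [hne]) hS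
  · exact attach_tree ends ne' (fun e => rfl) T 1 y (by simp [hne]) hT
end

section
/- Edge-split-attach preserves bispanning: if G = (V,E) is bispanning, ē ∈ E an edge with ends {x,y}, z ∈ V any vertex and v ∉ V a new vertex, then the graph obtained by deleting ē and adding v with edges {x,v}, {y,v}, {z,v} is bispanning. -/
section Helpers

variable {V E : Type*}

private lemma adj_symm' (ends : E → Sym2 V) (F : Set E) {u v : V}
    (h : MG.Adj ends F u v) : MG.Adj ends F v u := by
  obtain ⟨e, he, heq⟩ := h
  exact ⟨e, he, by rw [heq, Sym2.eq_swap]⟩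

private lemma reach_symm' (ends : E → Sym2 V) (F : Set E) {u v : V}
    (h : MG.Reach ends F u v) : MG.Reach ends F v u :=
  by haveI : Std.Symm (MG.Adj ends F) := ⟨fun _ _ hh => adj_symm' ends F hh⟩
     exact (Relation.ReflTransGen.symmetric (r := MG.Adj ends F)).symm _ _ h

private lemma ncard_subtype_eq (ebar : E) (A : Set E) :
    ({e : {e : E // e ≠ ebar} | (e : E) ∈ A}).ncard = (A \ {ebar}).ncard := by
  rw [← Set.ncard_image_of_injective _ (Subtype.val_injective (p := fun e => e ≠ ebar))]
  congr 1
  ext a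
  constructor
  · rintro ⟨⟨b, hb⟩, hbA, rfl⟩; exact ⟨hbA, hb⟩
  · rintro ⟨haA, hne⟩; exact ⟨⟨a, hne⟩, haA, rfl⟩

private lemma aux_bispanning [Finite V] [Finite E] [DecidableEq E]
    (ends : E → Sym2 V) (ebar : E) (x y : V) (hxy : x ≠ y)
    (hends : ends ebar = s(x, y)) (z : V)
    (S T : Set E) (hU : S ∪ T = Set.univ) (hd : Disjoint S T)
    (hS : MG.IsSpanningTree ends S) (hT : MG.IsSpanningTree ends T)
    (hmem : ebar ∈ S) :
    MG.Bispanning (V := Option V) (E := {e : E // e ≠ ebar} ⊕ Fin 3)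
      (Sum.elim (fun e => (ends e.val).map some)
        (fun i => if i = 0 then s(some x, (none : Option V))
          else if i = 1 then s(some y, none) else s(some z, none))) := by
  set E' := ({e : E // e ≠ ebar} ⊕ Fin 3)
  set ends' : E' → Sym2 (Option V) :=
    (Sum.elim (fun e => (ends e.val).map some)
        (fun i => if i = 0 then s(some x, (none : Option V))
          else if i = 1 then s(some y, none) else s(some z, none))) with hends'
  have hV2 : 2 ≤ Nat.card V := by
    have : Nontrivial V := ⟨x, y, hxy⟩
    have := Fintype.ofFinite V
    rw [Nat.card_eq_fintype_card]
    exact Fintype.one_lt_card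
  have hOV : Nat.card (Option V) = Nat.card V + 1 := by
    have := Fintype.ofFinite V
    simp [Nat.card_eq_fintype_card]
  have he0 : ends' (Sum.inr 0) = s(some x, none) := by simp [hends']
  have he1 : ends' (Sum.inr 1) = s(some y, none) := by
    rw [hends']; simp only [Sum.elim_inr]; rw [if_neg (by decide)]; simp
  have he2 : ends' (Sum.inr 2) = s(some z, none) := by
    rw [hends']; simp only [Sum.elim_inr]; rw [if_neg (by decide), if_neg (by decide)]
  have heL : ∀ e : {e : E // e ≠ ebar}, ∀ u w : V, ends e.val = s(u, w) →
      ends' (Sum.inl e) = s(some u, some w) := by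
    intro e u w h
    simp [hends', h, Sym2.map_pair_eq]
  refine ⟨Sum.inl '' {e | (e : E) ∈ S} ∪ Sum.inr '' {0, 1},
      Sum.inl '' {e | (e : E) ∈ T} ∪ Sum.inr '' {2}, ?_, ?_, ⟨?_, ?_⟩, ⟨?_, ?_⟩⟩
  · -- union is univ
    ext a
    simp only [Set.mem_union, Set.mem_image, Set.mem_univ, iff_true]
    rcases a with e | i
    · have : (e : E) ∈ S ∪ T := hU ▸ Set.mem_univ _
      rcases this with h | h
      · exact Or.inl (Or.inl ⟨e, h, rfl⟩)
      · exact Or.inr (Or.inl ⟨e, h, rfl⟩)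
    · have : i = 0 ∨ i = 1 ∨ i = 2 := by omega
      rcases this with rfl | rfl | rfl
      · exact Or.inl (Or.inr ⟨0, by simp, rfl⟩)
      · exact Or.inl (Or.inr ⟨1, by simp, rfl⟩)
      · exact Or.inr (Or.inr ⟨2, by simp, rfl⟩)
  · -- disjoint
    rw [Set.disjoint_left]
    rintro a (⟨e, he, rfl⟩ | ⟨i, hi, rfl⟩) hb
    · rcases hb with ⟨e', he', heq⟩ | ⟨i, hi, heq⟩
      · obtain rfl : e' = e := Sum.inl.injEq .. ▸ heq
        exact (Set.disjoint_left.mp hd he) he'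
      · simp at heq
    · rcases hb with ⟨e', he', heq⟩ | ⟨j, hj, heq⟩
      · simp at heq
      · obtain rfl : j = i := Sum.inr.injEq .. ▸ heq
        simp only [Set.mem_singleton_iff] at hj
        simp only [Set.mem_insert_iff, Set.mem_singleton_iff] at hi
        subst hj
        rcases hi with h | h <;> exact absurd h (by decide)
  · -- Conn S'
    set S' : Set E' := Sum.inl '' {e | (e : E) ∈ S} ∪ Sum.inr '' {0, 1} with hS'
    have h0 : Sum.inr 0 ∈ S' := Or.inr ⟨0, by simp, rfl⟩
    have h1 : Sum.inr 1 ∈ S' := Or.inr ⟨1, by simp, rfl⟩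
    have axn : MG.Adj ends' S' (some x) none := ⟨Sum.inr 0, h0, he0⟩
    have ayn : MG.Adj ends' S' (some y) none := ⟨Sum.inr 1, h1, he1⟩
    have step : ∀ u w : V, MG.Adj ends S u w → MG.Reach ends' S' (some u) (some w) := by
      intro u w ⟨e, heS, hew⟩
      by_cases hne : e = ebar
      · subst hne
        rw [hends] at hew
        rcases Sym2.eq_iff.mp hew with ⟨rfl, rfl⟩ | ⟨rfl, rfl⟩
        · exact (Relation.ReflTransGen.single axn).trans
            (Relation.ReflTransGen.single (adj_symm' _ _ ayn))
        · exact (Relation.ReflTransGen.single ayn).trans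
            (Relation.ReflTransGen.single (adj_symm' _ _ axn))
      · exact Relation.ReflTransGen.single
          ⟨Sum.inl ⟨e, hne⟩, Or.inl ⟨⟨e, hne⟩, heS, rfl⟩, heL ⟨e, hne⟩ u w hew⟩
    have lift : ∀ u w : V, MG.Reach ends S u w → MG.Reach ends' S' (some u) (some w) := by
      intro u w h
      induction h with
      | refl => exact Relation.ReflTransGen.refl
      | tail _ h2 ih => exact ih.trans (step _ _ h2)
    rintro (u | u) (w | w)
    · exact Relation.ReflTransGen.refl
    · exact (reach_symm' _ _ (Relation.ReflTransGen.single axn)).trans (lift x w (hS.1 x w))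
    · exact (lift u x (hS.1 u x)).trans (Relation.ReflTransGen.single axn)
    · exact lift u w (hS.1 u w)
  · -- card S'
    rw [Nat.card_coe_set_eq, Set.ncard_union_eq (by
        rw [Set.disjoint_left]; rintro a ⟨e, _, rfl⟩ ⟨i, _, h⟩; simp at h)
      (Set.toFinite _) (Set.toFinite _),
      Set.ncard_image_of_injective _ Sum.inl_injective,
      Set.ncard_image_of_injective _ Sum.inr_injective,
      ncard_subtype_eq, Set.ncard_diff_singleton_of_mem hmem,
      Set.ncard_pair (by decide : (0 : Fin 3) ≠ 1), hOV]
    have hcS : S.ncard = Nat.card V - 1 := by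
      rw [← Nat.card_coe_set_eq]; exact hS.2
    rw [hcS]
    omega
  · -- Conn T'
    have hnT : ebar ∉ T := Set.disjoint_left.mp hd hmem
    set T' : Set E' := Sum.inl '' {e | (e : E) ∈ T} ∪ Sum.inr '' {2} with hT'
    have h2 : Sum.inr 2 ∈ T' := Or.inr ⟨2, rfl, rfl⟩
    have azn : MG.Adj ends' T' (some z) none := ⟨Sum.inr 2, h2, he2⟩
    have step : ∀ u w : V, MG.Adj ends T u w → MG.Adj ends' T' (some u) (some w) := by
      intro u w ⟨e, heT, hew⟩
      have hne : e ≠ ebar := fun h => hnT (h ▸ heT)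
      exact ⟨Sum.inl ⟨e, hne⟩, Or.inl ⟨⟨e, hne⟩, heT, rfl⟩, heL ⟨e, hne⟩ u w hew⟩
    have lift : ∀ u w : V, MG.Reach ends T u w → MG.Reach ends' T' (some u) (some w) := by
      intro u w h
      induction h with
      | refl => exact Relation.ReflTransGen.refl
      | tail _ h2 ih => exact ih.trans (Relation.ReflTransGen.single (step _ _ h2))
    rintro (u | u) (w | w)
    · exact Relation.ReflTransGen.refl
    · exact (reach_symm' _ _ (Relation.ReflTransGen.single azn)).trans (lift z w (hT.1 z w))
    · exact (lift u z (hT.1 u z)).trans (Relation.ReflTransGen.single azn)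
    · exact lift u w (hT.1 u w)
  · -- card T'
    have hnT : ebar ∉ T := Set.disjoint_left.mp hd hmem
    rw [Nat.card_coe_set_eq, Set.ncard_union_eq (by
        rw [Set.disjoint_left]; rintro a ⟨e, _, rfl⟩ ⟨i, _, h⟩; simp at h)
      (Set.toFinite _) (Set.toFinite _),
      Set.ncard_image_of_injective _ Sum.inl_injective,
      Set.ncard_image_of_injective _ Sum.inr_injective,
      ncard_subtype_eq, Set.diff_singleton_eq_self hnT,
      Set.ncard_singleton, hOV]
    have hcT : T.ncard = Nat.card V - 1 := by
      rw [← Nat.card_coe_set_eq]; exact hT.2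
    rw [hcT]
    omega

end Helpers


/-- Edge-split-attach preserves bispanning: deleting an edge `ē` with ends `{x,y}` and
adding a new vertex joined to `x`, `y` and `z` yields a bispanning graph. -/
theorem edge_split_attach_bispanning {V E : Type*} [Finite V] [Finite E] [DecidableEq E]
    (ends : E → Sym2 V) (hloop : ∀ e : E, ¬ (ends e).IsDiag)
    (h : MG.Bispanning ends) (ebar : E) (x y : V) (hends : ends ebar = s(x, y)) (z : V) :
    MG.Bispanning (V := Option V) (E := {e : E // e ≠ ebar} ⊕ Fin 3)
      (Sum.elim (fun e => (ends e.val).map some)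
        (fun i => if i = 0 then s(some x, (none : Option V))
          else if i = 1 then s(some y, none) else s(some z, none))) := by
  have hxy : x ≠ y := by
    have := hloop ebar
    rw [hends, Sym2.mk_isDiag_iff] at this
    exact this
  obtain ⟨S, T, hU, hd, hS, hT⟩ := h
  have : ebar ∈ S ∪ T := hU ▸ Set.mem_univ _
  rcases this with hm | hm
  · exact aux_bispanning ends ebar x y hxy hends z S T hU hd hS hT hm
  · exact aux_bispanning ends ebar x y hxy hends z T S
      (Set.union_comm T S ▸ hU) hd.symm hT hS hm
end
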